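/- arXiv:1407.0525 — 3 statements merged into one kernel-verified Lean document; each statement's English description precedes it below -/
import Mathlib

section
/- Let H be an infinite-dimensional Hilbert space and T a contraction on H similar to a unitary operator. Then dim ker(A_T − r I) ∈ {0, ∞}, where r = min σ(A_T) is the inner spectral radius of the asymptotic limit A_T; consequently r ∈ σ_e(A_T), the essential spectrum of A_T. -/
open ContinuousLinearMap Filter Topology

open scoped Pointwise

local notation "⟪" x ", " y "⟫" => @inner ℂ _ _ x y

/-- Equality case for positive operators: if `re ⟪P y, y⟫ = 0` then `P y = 0`. -/
lemma stmt17_pos_eq_zero {H : Type*} [NormedAddCommGroup H] [InnerProductSpace ℂ H]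
    [CompleteSpace H] {P : H →L[ℂ] H} (hP : P.IsPositive) {y : H}
    (h : RCLike.re ⟪P y, y⟫ = 0) : P y = 0 := by
  by_contra hne
  have hsymm : ∀ u v : H, ⟪P u, v⟫ = ⟪u, P v⟫ := fun u v =>
    hP.isSymmetric u v
  set a := ‖P y‖ ^ 2 with ha
  have ha0 : 0 < a := pow_pos (norm_pos_iff.mpr hne) 2
  set c := RCLike.re ⟪P (P y), P y⟫ with hc
  have hc0 : 0 ≤ c := hP.re_inner_nonneg_left _
  have e1 : Complex.re ⟪P y, P y⟫ = a := by
    have := inner_self_eq_norm_sq (𝕜 := ℂ) (P y); simpa using this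
  have e2 : Complex.re ⟪P (P y), y⟫ = a := by
    rw [hsymm (P y) y]; exact e1
  have e3 : Complex.re ⟪P y, y⟫ = 0 := by simpa using h
  have e4 : Complex.re ⟪P (P y), P y⟫ = c := by simp [hc]
  have key : ∀ s : ℝ, 0 ≤ s ^ 2 * c - 2 * s * a := by
    intro s
    have h0 := hP.re_inner_nonneg_left (y - (s : ℂ) • P y)
    have hinner : ⟪P (y - (s:ℂ) • P y), y - (s:ℂ) • P y⟫
        = ⟪P y, y⟫ - (s:ℂ) * ⟪P y, P y⟫ - (s:ℂ) * ⟪P (P y), y⟫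
          + (s:ℂ) * ((s:ℂ) * ⟪P (P y), P y⟫) := by
      rw [map_sub, map_smul, inner_sub_left, inner_sub_right, inner_sub_right,
        inner_smul_left, inner_smul_left, inner_smul_right, inner_smul_right,
        Complex.conj_ofReal]
      ring
    have hexp : RCLike.re ⟪P (y - (s:ℂ) • P y), y - (s:ℂ) • P y⟫
        = s ^ 2 * c - 2 * s * a := by
      rw [hinner]
      simp only [RCLike.re_to_complex, Complex.add_re, Complex.sub_re,
        Complex.re_ofReal_mul, e1, e2, e3, e4]
      ring
    rw [hexp] at h0
    exact h0
  have hkey := key (a / (c + 1))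
  have hc1 : (0:ℝ) < c + 1 := by linarith
  have h2 : (a/(c+1))^2 * c - 2*(a/(c+1))*a = (a^2*c - 2*a^2*(c+1))/((c+1)^2) := by
    field_simp
  rw [h2] at hkey
  have h6 := mul_nonneg hkey (le_of_lt (pow_pos hc1 2))
  rw [div_mul_cancel₀ _ (by positivity : ((c:ℝ)+1)^2 ≠ 0)] at h6
  nlinarith [mul_pos ha0 ha0]

set_option maxHeartbeats 2000000 in
/-- Let `H` be infinite-dimensional and `T` a contraction similar to a unitary operator,
with asymptotic limit `A = A_T` and `r = min σ(A)`.  Then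
`dim ker (A − r·I) ∈ {0, ∞}` (i.e. if that kernel is finite-dimensional it is trivial);
consequently `r` belongs to the essential spectrum of `A`, i.e. `A − r·I` is not
invertible modulo compact operators. -/
theorem stmt17 {H : Type*} [NormedAddCommGroup H] [InnerProductSpace ℂ H] [CompleteSpace H]
    (hdim : ¬ FiniteDimensional ℂ H)
    (T : H →L[ℂ] H) (hT : ‖T‖ ≤ 1)
    (hsim : ∃ X X' U : H →L[ℂ] H, X ∘L X' = 1 ∧ X' ∘L X = 1 ∧
      U ∈ unitary (H →L[ℂ] H) ∧ T = X ∘L U ∘L X')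
    (A : H →L[ℂ] H)
    (hA : ∀ x : H, Tendsto (fun n : ℕ => (adjoint (T ^ n) ∘L T ^ n) x) atTop (𝓝 (A x)))
    (r : ℝ) (hr : (r : ℂ) ∈ spectrum ℂ A)
    (hrmin : ∀ z ∈ spectrum ℂ A, r ≤ z.re) :
    (FiniteDimensional ℂ (LinearMap.ker ((A - (r : ℂ) • (1 : H →L[ℂ] H) : H →L[ℂ] H) : H →ₗ[ℂ] H)) →
      LinearMap.ker ((A - (r : ℂ) • (1 : H →L[ℂ] H) : H →L[ℂ] H) : H →ₗ[ℂ] H) = ⊥) ∧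
    ¬ ∃ B K₁ K₂ : H →L[ℂ] H, IsCompactOperator (⇑K₁) ∧ IsCompactOperator (⇑K₂) ∧
        B ∘L (A - (r : ℂ) • (1 : H →L[ℂ] H)) = 1 + K₁ ∧
        (A - (r : ℂ) • (1 : H →L[ℂ] H)) ∘L B = 1 + K₂ := by
  obtain ⟨X, X', U, hXX', hX'X, hU, hTdef⟩ := hsim
  have hXX'pt : ∀ w, X (X' w) = w := fun w => by
    have := DFunLike.congr_fun hXX' w; simpa using this
  have hX'Xpt : ∀ w, X' (X w) = w := fun w => by
    have := DFunLike.congr_fun hX'X w; simpa using this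
  have hUU : (star U) * U = 1 := (Unitary.mem_iff.mp hU).1
  have hUU' : U * (star U) = 1 := (Unitary.mem_iff.mp hU).2
  set T' : H →L[ℂ] H := X ∘L (star U) ∘L X' with hT'def
  have hTT'pt : ∀ w, T (T' w) = w := by
    intro w
    rw [hTdef, hT'def]
    simp only [comp_apply]
    rw [hX'Xpt]
    have h1 : U ((star U) (X' w)) = X' w := by
      have := DFunLike.congr_fun hUU' (X' w); simpa [mul_apply] using this
    rw [h1, hXX'pt]
  have hT'Tpt : ∀ w, T' (T w) = w := by
    intro w
    rw [hTdef, hT'def]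
    simp only [comp_apply]
    rw [hX'Xpt]
    have h1 : (star U) (U (X' w)) = X' w := by
      have := DFunLike.congr_fun hUU (X' w); simpa [mul_apply] using this
    rw [h1, hXX'pt]
  have hpowinv : ∀ (n : ℕ) (z : H), (T ^ n) ((T' ^ n) z) = z := by
    intro n
    induction n with
    | zero => intro z; simp
    | succ k ih =>
      intro z
      rw [pow_succ T k, pow_succ' T' k, ContinuousLinearMap.mul_apply, ContinuousLinearMap.mul_apply, hTT'pt, ih]
  -- unitary powers are isometries
  have hUn : ∀ n : ℕ, (U ^ n) ∈ unitary (H →L[ℂ] H) := fun n => pow_mem hU n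
  have hUiso : ∀ (n : ℕ) (w : H), ‖(U ^ n) w‖ = ‖w‖ := by
    intro n w
    have h1 : star (U ^ n) * U ^ n = 1 := (Unitary.mem_iff.mp (hUn n)).1
    have h3 : (star (U ^ n)) ((U ^ n) w) = w := by
      have := DFunLike.congr_fun h1 w
      simpa [mul_apply] using this
    have h2 : ⟪(U ^ n) w, (U ^ n) w⟫ = ⟪w, w⟫ := by
      rw [← adjoint_inner_right, ← star_eq_adjoint, h3]
    have h4 := congrArg RCLike.re h2
    rw [inner_self_eq_norm_sq, inner_self_eq_norm_sq] at h4
    nlinarith [norm_nonneg ((U ^ n) w), norm_nonneg w]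
  have hstep : ∀ w, X' (T w) = U (X' w) := by
    intro w; rw [hTdef]; simp only [comp_apply]; rw [hX'Xpt]
  have hXT : ∀ (n : ℕ) (z : H), X' ((T ^ n) z) = (U ^ n) (X' z) := by
    intro n
    induction n with
    | zero => intro z; simp
    | succ k ih =>
      intro z
      rw [pow_succ' T k, ContinuousLinearMap.mul_apply, hstep, ih, pow_succ' U k, ContinuousLinearMap.mul_apply]
  have hTle : ∀ w : H, ‖T w‖ ≤ ‖w‖ := fun w => by
    calc ‖T w‖ ≤ ‖T‖ * ‖w‖ := T.le_opNorm w
      _ ≤ 1 * ‖w‖ := mul_le_mul_of_nonneg_right hT (norm_nonneg w)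
      _ = ‖w‖ := one_mul _
  have hTnle : ∀ (n : ℕ) (w : H), ‖(T ^ n) w‖ ≤ ‖w‖ := by
    intro n
    induction n with
    | zero => intro w; simp
    | succ k ih => intro w; rw [pow_succ T k, ContinuousLinearMap.mul_apply]; exact (ih (T w)).trans (hTle w)
  have hlow : ∀ (n : ℕ) (z : H), ‖z‖ ≤ (‖X‖ * ‖X'‖) * ‖(T ^ n) z‖ := by
    intro n z
    have h1 : ‖z‖ ≤ ‖X‖ * ‖X' z‖ := by
      conv_lhs => rw [← hXX'pt z]
      exact X.le_opNorm _
    have h2 : ‖X' z‖ = ‖X' ((T ^ n) z)‖ := by rw [hXT n z, hUiso]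
    have h3 : ‖X' ((T ^ n) z)‖ ≤ ‖X'‖ * ‖(T ^ n) z‖ := X'.le_opNorm _
    calc ‖z‖ ≤ ‖X‖ * ‖X' z‖ := h1
      _ = ‖X‖ * ‖X' ((T ^ n) z)‖ := by rw [h2]
      _ ≤ ‖X‖ * (‖X'‖ * ‖(T ^ n) z‖) := mul_le_mul_of_nonneg_left h3 (norm_nonneg X)
      _ = (‖X‖ * ‖X'‖) * ‖(T ^ n) z‖ := by ring
  -- limit facts
  have hq : ∀ z : H, Tendsto (fun n : ℕ => ‖(T ^ n) z‖ ^ 2) atTop (𝓝 (RCLike.re ⟪A z, z⟫)) := by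
    intro z
    have h1 : Tendsto (fun n : ℕ => ⟪(adjoint (T ^ n) ∘L T ^ n) z, z⟫) atTop (𝓝 ⟪A z, z⟫) :=
      (hA z).inner tendsto_const_nhds
    have h2 : Tendsto (fun n : ℕ => RCLike.re ⟪(adjoint (T ^ n) ∘L T ^ n) z, z⟫) atTop
        (𝓝 (RCLike.re ⟪A z, z⟫)) := (RCLike.continuous_re.tendsto _).comp h1
    have h3 : (fun n : ℕ => ‖(T ^ n) z‖ ^ 2)
        = fun n : ℕ => RCLike.re ⟪(adjoint (T ^ n) ∘L T ^ n) z, z⟫ := by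
      funext n
      rw [comp_apply, adjoint_inner_left, inner_self_eq_norm_sq]
    rw [h3]; exact h2
  have hsymmA : ∀ x y : H, ⟪A x, y⟫ = ⟪x, A y⟫ := by
    intro x y
    have h1 : Tendsto (fun n : ℕ => ⟪(adjoint (T ^ n) ∘L T ^ n) x, y⟫) atTop (𝓝 ⟪A x, y⟫) :=
      (hA x).inner tendsto_const_nhds
    have h2 : Tendsto (fun n : ℕ => ⟪x, (adjoint (T ^ n) ∘L T ^ n) y⟫) atTop (𝓝 ⟪x, A y⟫) :=
      tendsto_const_nhds.inner (hA y)
    have h3 : (fun n : ℕ => ⟪(adjoint (T ^ n) ∘L T ^ n) x, y⟫)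
        = fun n : ℕ => ⟪x, (adjoint (T ^ n) ∘L T ^ n) y⟫ := by
      funext n
      rw [comp_apply, comp_apply, adjoint_inner_left, adjoint_inner_right]
    rw [h3] at h1
    exact tendsto_nhds_unique h1 h2
  have hsa : IsSelfAdjoint A := isSelfAdjoint_iff_isSymmetric.mpr fun x y => hsymmA x y
  set S : H →L[ℂ] H := A - (r:ℂ) • (1 : H →L[ℂ] H) with hSdef
  have hsaS : IsSelfAdjoint S := by
    refine hsa.sub ?_
    rw [IsSelfAdjoint, star_smul, star_one, Complex.star_def, Complex.conj_ofReal]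
  have hSpos : S.IsPositive := by
    rw [← ContinuousLinearMap.nonneg_iff_isPositive,
      StarOrderedRing.nonneg_iff_spectrum_nonneg (R := ℝ) S hsaS]
    intro t ht
    have ht' : (t : ℂ) ∈ spectrum ℂ S := by
      have := spectrum.algebraMap_mem ℂ ht
      simpa using this
    have halg : (r : ℂ) • (1 : H →L[ℂ] H) = algebraMap ℂ (H →L[ℂ] H) ((r:ℂ)) :=
      (Algebra.algebraMap_eq_smul_one _).symm
    have hspec : spectrum ℂ S = spectrum ℂ A - ({(r : ℂ)} : Set ℂ) := by
      rw [hSdef, halg, ← spectrum.sub_singleton_eq]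
    rw [hspec] at ht'
    obtain ⟨z, hz, w, hw, hzw⟩ := Set.mem_sub.mp ht'
    rw [Set.mem_singleton_iff] at hw
    subst hw
    have h5 := hrmin z hz
    have h6 : z.re - r = t := by
      have := congrArg Complex.re hzw
      simpa using this
    linarith
  have hform : ∀ z : H, RCLike.re ⟪S z, z⟫ = RCLike.re ⟪A z, z⟫ - r * ‖z‖ ^ 2 := by
    intro z
    have h7 : Complex.re ⟪z, z⟫ = ‖z‖ ^ 2 := by
      have := inner_self_eq_norm_sq (𝕜 := ℂ) z; simpa using this
    rw [hSdef, sub_apply, smul_apply, ContinuousLinearMap.one_apply, inner_sub_left, inner_smul_left,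
      Complex.conj_ofReal]
    simp only [RCLike.re_to_complex, Complex.sub_re, Complex.re_ofReal_mul, h7]
  have hAr : ∀ z : H, r * ‖z‖ ^ 2 ≤ RCLike.re ⟪A z, z⟫ := by
    intro z
    linarith [hform z, hSpos.re_inner_nonneg_left z]
  have hker_iff : ∀ z : H, z ∈ LinearMap.ker (S : H →ₗ[ℂ] H) ↔ RCLike.re ⟪A z, z⟫ = r * ‖z‖ ^ 2 := by
    intro z
    constructor
    · intro hz
      have hz' : S z = 0 := LinearMap.mem_ker.mp hz
      have h8 := hform z
      rw [hz'] at h8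
      simp only [inner_zero_left, map_zero] at h8
      linarith
    · intro hz
      have h0 : RCLike.re ⟪S z, z⟫ = 0 := by rw [hform z]; linarith
      exact LinearMap.mem_ker.mpr (stmt17_pos_eq_zero hSpos h0)
  -- Part 1
  have part1 : FiniteDimensional ℂ (LinearMap.ker (S : H →ₗ[ℂ] H)) → LinearMap.ker (S : H →ₗ[ℂ] H) = ⊥ := by
    intro hfin
    by_contra hbot
    obtain ⟨x, hxM, hx0⟩ := Submodule.ne_bot_iff _ |>.mp hbot
    have hqx : RCLike.re ⟪A x, x⟫ = r * ‖x‖ ^ 2 := (hker_iff x).mp hxM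
    have hx2 : 0 < ‖x‖ ^ 2 := pow_pos (norm_pos_iff.mpr hx0) 2
    have hrpos : 0 < r := by
      have hC : ∀ n : ℕ, ‖x‖ ^ 2 ≤ (‖X‖ * ‖X'‖) ^ 2 * ‖(T ^ n) x‖ ^ 2 := by
        intro n
        have := hlow n x
        nlinarith [norm_nonneg ((T ^ n) x), norm_nonneg x, norm_nonneg X, norm_nonneg X']
      have hlim : Tendsto (fun n : ℕ => (‖X‖ * ‖X'‖) ^ 2 * ‖(T ^ n) x‖ ^ 2) atTop
          (𝓝 ((‖X‖ * ‖X'‖) ^ 2 * (r * ‖x‖ ^ 2))) := by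
        rw [← hqx]
        exact (hq x).const_mul _
      have hle : ‖x‖ ^ 2 ≤ (‖X‖ * ‖X'‖) ^ 2 * (r * ‖x‖ ^ 2) := ge_of_tendsto' hlim hC
      by_contra hrneg
      push_neg at hrneg
      nlinarith [sq_nonneg (‖X‖ * ‖X'‖), mul_nonneg (sq_nonneg (‖X‖ * ‖X'‖)) hx2.le]
    have hqT : ∀ z : H, RCLike.re ⟪A (T z), T z⟫ = RCLike.re ⟪A z, z⟫ := by
      intro z
      have h1 := hq (T z)
      have h2 : Tendsto (fun n : ℕ => ‖(T ^ (n + 1)) z‖ ^ 2) atTop (𝓝 (RCLike.re ⟪A z, z⟫)) := by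
        have := (hq z).comp (tendsto_add_atTop_nat 1)
        exact this
      have h3 : (fun n : ℕ => ‖(T ^ n) (T z)‖ ^ 2) = fun n : ℕ => ‖(T ^ (n + 1)) z‖ ^ 2 := by
        funext n; rw [pow_succ T n, ContinuousLinearMap.mul_apply]
      rw [h3] at h1
      exact tendsto_nhds_unique h1 h2
    have hT'M : ∀ z, z ∈ LinearMap.ker (S : H →ₗ[ℂ] H) → T' z ∈ LinearMap.ker (S : H →ₗ[ℂ] H) ∧ ‖T' z‖ = ‖z‖ := by
      intro z hz
      have hq1 : RCLike.re ⟪A (T' z), T' z⟫ = RCLike.re ⟪A z, z⟫ := by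
        have := hqT (T' z)
        rw [hTT'pt z] at this
        exact this.symm
      have hqz : RCLike.re ⟪A z, z⟫ = r * ‖z‖ ^ 2 := (hker_iff z).mp hz
      have h9 := hAr (T' z)
      rw [hq1, hqz] at h9
      have hsq : ‖T' z‖ ^ 2 ≤ ‖z‖ ^ 2 := (mul_le_mul_iff_right₀ hrpos).mp h9
      have hle2 : ‖T' z‖ ≤ ‖z‖ := by
        nlinarith [hsq, norm_nonneg (T' z), norm_nonneg z, sq_nonneg (‖T' z‖ + ‖z‖)]
      have hge : ‖z‖ ≤ ‖T' z‖ := by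
        have := hTle (T' z); rwa [hTT'pt z] at this
      have hnorm : ‖T' z‖ = ‖z‖ := le_antisymm hle2 hge
      refine ⟨(hker_iff (T' z)).mpr ?_, hnorm⟩
      rw [hq1, hqz, hnorm]
    haveI := hfin
    let f : LinearMap.ker (S : H →ₗ[ℂ] H) →ₗ[ℂ] LinearMap.ker (S : H →ₗ[ℂ] H) :=
      (T' : H →ₗ[ℂ] H).restrict (p := LinearMap.ker (S : H →ₗ[ℂ] H)) (q := LinearMap.ker (S : H →ₗ[ℂ] H))
        (fun z hz => (hT'M z hz).1)
    have hfcoe : ∀ z : LinearMap.ker (S : H →ₗ[ℂ] H), ((f z : LinearMap.ker (S : H →ₗ[ℂ] H)) : H) = T' (z : H) :=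
      fun z => rfl
    have hfinj : Function.Injective f := by
      intro a b hab
      have h1 : T' ((a : H) - (b : H)) = 0 := by
        rw [map_sub, sub_eq_zero]
        have := congrArg Subtype.val hab
        rwa [hfcoe a, hfcoe b] at this
      have h2 : ((a : H) - (b : H)) ∈ LinearMap.ker (S : H →ₗ[ℂ] H) :=
        Submodule.sub_mem _ a.2 b.2
      have h3 := (hT'M _ h2).2
      rw [h1, norm_zero] at h3
      have h4 : (a : H) - (b : H) = 0 := norm_eq_zero.mp h3.symm
      exact Subtype.ext (sub_eq_zero.mp h4)
    have hfsurj : Function.Surjective f := LinearMap.injective_iff_surjective.mp hfinj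
    have hTM : ∀ z, z ∈ LinearMap.ker (S : H →ₗ[ℂ] H) → T z ∈ LinearMap.ker (S : H →ₗ[ℂ] H) ∧ ‖T z‖ = ‖z‖ := by
      intro z hz
      obtain ⟨y, hy⟩ := hfsurj ⟨z, hz⟩
      have hy1 : T' (y : H) = z := by
        have := congrArg Subtype.val hy
        rwa [hfcoe y] at this
      have hTz : T z = (y : H) := by rw [← hy1, hTT'pt]
      refine ⟨by rw [hTz]; exact y.2, ?_⟩
      rw [hTz, ← hy1, (hT'M (y : H) y.2).2]
    have hTnx : ∀ n : ℕ, (T ^ n) x ∈ LinearMap.ker (S : H →ₗ[ℂ] H) ∧ ‖(T ^ n) x‖ = ‖x‖ := by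
      intro n
      induction n with
      | zero => exact ⟨by simpa using hxM, by simp⟩
      | succ k ih =>
        have he : (T ^ (k+1)) x = T ((T ^ k) x) := by rw [pow_succ' T k, ContinuousLinearMap.mul_apply]
        rw [he]
        exact ⟨(hTM _ ih.1).1, by rw [(hTM _ ih.1).2, ih.2]⟩
    have hqx1 : RCLike.re ⟪A x, x⟫ = ‖x‖ ^ 2 := by
      have h1 : Tendsto (fun n : ℕ => ‖(T ^ n) x‖ ^ 2) atTop (𝓝 (‖x‖ ^ 2)) := by
        have hcn : (fun n : ℕ => ‖(T ^ n) x‖ ^ 2) = fun _ : ℕ => ‖x‖ ^ 2 := by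
          funext n; rw [(hTnx n).2]
        rw [hcn]; exact tendsto_const_nhds
      exact tendsto_nhds_unique (hq x) h1
    have hr1 : r = 1 := by
      rw [hqx1] at hqx
      have hz : (r - 1) * ‖x‖ ^ 2 = 0 := by linarith [hqx]
      rcases mul_eq_zero.mp hz with h' | h'
      · linarith
      · exact absurd h' hx2.ne'
    have hMtop : LinearMap.ker (S : H →ₗ[ℂ] H) = ⊤ := by
      rw [Submodule.eq_top_iff']
      intro y
      apply (hker_iff y).mpr
      have hup : RCLike.re ⟪A y, y⟫ ≤ ‖y‖ ^ 2 := by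
        apply le_of_tendsto (hq y)
        filter_upwards with n
        exact pow_le_pow_left₀ (norm_nonneg _) (hTnle n y) 2
      have hlo := hAr y
      rw [hr1] at hlo ⊢
      linarith
    haveI : FiniteDimensional ℂ (⊤ : Submodule ℂ H) := hMtop ▸ hfin
    exact hdim (Module.Finite.equiv (Submodule.topEquiv (R := ℂ) (M := H)))
  refine ⟨part1, ?_⟩
  rintro ⟨B, K₁, K₂, hK₁, hK₂, hB1, hB2⟩
  obtain ⟨e, he1, he2, he3⟩ :
      ∃ e : ℕ → H, (∀ n, ‖e n‖ = 1) ∧ Tendsto (fun n => S (e n)) atTop (𝓝 0) ∧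
        ∀ φ : ℕ → ℕ, StrictMono φ → ∀ y : H, ¬ Tendsto (e ∘ φ) atTop (𝓝 y) := by
    by_cases hfin : FiniteDimensional ℂ (LinearMap.ker (S : H →ₗ[ℂ] H))
    · -- trivial kernel: S injective but not bounded below
      have hbot := part1 hfin
      have hsymmS : ∀ u w : H, ⟪S u, w⟫ = ⟪u, S w⟫ := fun u w =>
        (isSelfAdjoint_iff_isSymmetric.mp hsaS) u w
      have hnb : ∀ n : ℕ, ∃ z : H, ((n:ℝ) + 1) * ‖S z‖ < ‖z‖ := by
        by_contra hcon
        push_neg at hcon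
        obtain ⟨n, hn⟩ := hcon
        have hbound : ∀ z : H, ‖z‖ ≤ ((n : ℝ) + 1) * ‖S z‖ := hn
        have hanti : AntilipschitzWith (⟨(n:ℝ) + 1, by positivity⟩ : NNReal) S :=
          S.antilipschitz_of_bound (fun z => hbound z)
        have hdense : (LinearMap.range (S : H →ₗ[ℂ] H)).topologicalClosure = ⊤ := by
          rw [Submodule.topologicalClosure_eq_top_iff, Submodule.eq_bot_iff]
          intro v hv
          rw [Submodule.mem_orthogonal] at hv
          have h1 : ⟪S v, S v⟫ = 0 := by
            rw [← hsymmS (S v) v]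
            exact hv _ (LinearMap.mem_range_self _ (S v))
          have h2 : S v = 0 := inner_self_eq_zero.mp h1
          have h3 : v ∈ LinearMap.ker (S : H →ₗ[ℂ] H) := LinearMap.mem_ker.mpr h2
          rw [hbot] at h3
          simpa using h3
        have hbij : Function.Bijective S := by
          rw [ContinuousLinearMap.bijective_iff_dense_range_and_antilipschitz]
          exact ⟨hdense, ⟨_, hanti⟩⟩
        have hunit : IsUnit S := ContinuousLinearMap.isUnit_iff_bijective.mpr hbij
        have hnotunit : ¬ IsUnit (algebraMap ℂ (H →L[ℂ] H) ((r:ℝ) : ℂ) - A) :=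
          spectrum.mem_iff.mp hr
        apply hnotunit
        have hSneg : algebraMap ℂ (H →L[ℂ] H) ((r:ℝ) : ℂ) - A = -S := by
          rw [hSdef, neg_sub, Algebra.algebraMap_eq_smul_one]
        rw [hSneg]
        exact hunit.neg
      choose z hz using hnb
      have hz0 : ∀ n, z n ≠ 0 := by
        intro n hzero
        have := hz n
        rw [hzero] at this
        simp at this
      set e : ℕ → H := fun n => ((‖z n‖ : ℂ))⁻¹ • z n with he
      have hnorm1 : ∀ n, ‖e n‖ = 1 := by
        intro n
        rw [he]
        simp only [norm_smul, norm_inv, Complex.norm_real, Real.norm_eq_abs, abs_norm]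
        exact inv_mul_cancel₀ (norm_ne_zero_iff.mpr (hz0 n))
      have hSe0 : Tendsto (fun n => S (e n)) atTop (𝓝 0) := by
        have hb : ∀ n : ℕ, ‖S (e n)‖ ≤ 1 / ((n:ℝ) + 1) := by
          intro n
          have hzpos : 0 < ‖z n‖ := norm_pos_iff.mpr (hz0 n)
          have hnpos : (0:ℝ) < (n:ℝ) + 1 := by positivity
          have hSe : ‖S (e n)‖ = ‖z n‖⁻¹ * ‖S (z n)‖ := by
            rw [he]
            simp only [map_smul, norm_smul, norm_inv, Complex.norm_real,
              Real.norm_eq_abs, abs_norm]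
          rw [hSe, le_div_iff₀ hnpos]
          have h1 : ((n:ℝ) + 1) * ‖S (z n)‖ ≤ ‖z n‖ := (hz n).le
          calc ‖z n‖⁻¹ * ‖S (z n)‖ * ((n:ℝ) + 1)
              = ‖z n‖⁻¹ * (((n:ℝ) + 1) * ‖S (z n)‖) := by ring
            _ ≤ ‖z n‖⁻¹ * ‖z n‖ :=
                mul_le_mul_of_nonneg_left h1 (inv_nonneg.mpr hzpos.le)
            _ = 1 := inv_mul_cancel₀ hzpos.ne'
        apply squeeze_zero_norm hb
        exact tendsto_one_div_add_atTop_nhds_zero_nat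
      refine ⟨e, hnorm1, hSe0, ?_⟩
      · intro φ hφ y hy
        have hy1 : ‖y‖ = 1 := by
          have h1 : Tendsto (fun n => ‖(e ∘ φ) n‖) atTop (𝓝 ‖y‖) :=
            (continuous_norm.tendsto y).comp hy
          have h2 : (fun n => ‖(e ∘ φ) n‖) = fun _ => (1:ℝ) :=
            funext fun n => hnorm1 (φ n)
          rw [h2] at h1
          exact tendsto_nhds_unique h1 tendsto_const_nhds
        have hSy : S y = 0 := by
          have h1 : Tendsto (fun n => S ((e ∘ φ) n)) atTop (𝓝 (S y)) :=
            (S.continuous.tendsto y).comp hy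
          have h2 : Tendsto (fun n => S (e (φ n))) atTop (𝓝 0) :=
            hSe0.comp hφ.tendsto_atTop
          exact tendsto_nhds_unique h1 h2
        have h3 : y ∈ LinearMap.ker (S : H →ₗ[ℂ] H) := LinearMap.mem_ker.mpr hSy
        rw [hbot] at h3
        rw [Submodule.mem_bot] at h3
        rw [h3, norm_zero] at hy1
        norm_num at hy1
    · -- infinite-dimensional kernel: orthonormal sequence
      haveI : CompleteSpace (LinearMap.ker (S : H →ₗ[ℂ] H)) :=
        (ContinuousLinearMap.isClosed_ker S).completeSpace_coe
      obtain ⟨w, b, hb⟩ := exists_hilbertBasis ℂ (LinearMap.ker (S : H →ₗ[ℂ] H))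
      have hwinf : w.Infinite := by
        by_contra hfinw
        rw [Set.not_infinite] at hfinw
        apply hfin
        have hrange : Set.range ⇑b = w := by rw [hb, Subtype.range_coe]
        have hdense2 : (Submodule.span ℂ (w : Set (LinearMap.ker (S : H →ₗ[ℂ] H)))).topologicalClosure = ⊤ := by
          have := b.dense_span
          rwa [hrange] at this
        haveI hfd : FiniteDimensional ℂ (Submodule.span ℂ w) :=
          FiniteDimensional.span_of_finite ℂ hfinw
        have hclosed : IsClosed ((Submodule.span ℂ w : Submodule ℂ (LinearMap.ker (S : H →ₗ[ℂ] H))) :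
            Set (LinearMap.ker (S : H →ₗ[ℂ] H))) := Submodule.closed_of_finiteDimensional _
        have htop : Submodule.span ℂ w = (⊤ : Submodule ℂ (LinearMap.ker (S : H →ₗ[ℂ] H))) := by
          rw [← hclosed.submodule_topologicalClosure_eq]
          exact hdense2
        exact ⟨Submodule.fg_def.mpr ⟨w, hfinw, htop⟩⟩
      let g : ℕ → w := fun n => (Set.Infinite.natEmbedding w hwinf) n
      have hginj : Function.Injective g := (Set.Infinite.natEmbedding w hwinf).injective
      have horth : Orthonormal ℂ (fun n : ℕ => b (g n)) := b.orthonormal.comp g hginj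
      set e : ℕ → H := fun n => ((b (g n) : LinearMap.ker (S : H →ₗ[ℂ] H)) : H) with he
      have hnorm1 : ∀ n, ‖e n‖ = 1 := by
        intro n
        have := horth.1 n
        rw [he]
        rw [Submodule.norm_coe]
        exact this
      refine ⟨e, hnorm1, ?_, ?_⟩
      · have hez : ∀ n, S (e n) = 0 := fun n => LinearMap.mem_ker.mp (b (g n)).2
        have hez' : (fun n => S (e n)) = fun _ => (0:H) := funext hez
        rw [hez']
        exact tendsto_const_nhds
      · intro φ hφ y hy
        have hCauchy : CauchySeq (e ∘ φ) := hy.cauchySeq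
        obtain ⟨N, hN⟩ := Metric.cauchySeq_iff'.mp hCauchy 1 one_pos
        have h1 := hN (N + 1) (Nat.le_succ N)
        have hneidx : φ (N+1) ≠ φ N := (hφ (Nat.lt_succ_self N)).ne'
        have hinner0 : ⟪e (φ (N+1)), e (φ N)⟫ = 0 := by
          have h2 := horth.2 hneidx
          rw [he, ← Submodule.coe_inner]
          exact_mod_cast h2
        have hexp : ‖e (φ (N+1)) - e (φ N)‖ ^ 2 = 2 := by
          rw [norm_sub_sq (𝕜 := ℂ)]
          rw [hinner0]
          rw [hnorm1, hnorm1]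
          norm_num
        have hd : dist ((e ∘ φ) (N+1)) ((e ∘ φ) N) < 1 := h1
        rw [Function.comp_apply, Function.comp_apply, dist_eq_norm] at hd
        nlinarith [norm_nonneg (e (φ (N+1)) - e (φ N))]
  -- final compactness contradiction
  have hBS : ∀ n, e n = B (S (e n)) - K₁ (e n) := by
    intro n
    have h1 := DFunLike.congr_fun hB1 (e n)
    simp only [comp_apply, add_apply, ContinuousLinearMap.one_apply] at h1
    rw [h1, add_sub_cancel_right]
  have hBz : Tendsto (fun n => B (S (e n))) atTop (𝓝 0) := by
    have := (B.continuous.tendsto 0).comp he2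
    simpa using (show Tendsto (fun n => B (S (e n))) atTop (𝓝 (B 0)) from this)
  have hcpt : IsCompact (closure (⇑K₁ '' Metric.closedBall 0 1)) :=
    hK₁.isCompact_closure_image_of_bounded Metric.isBounded_closedBall
  have hmem : ∀ n, K₁ (e n) ∈ closure (⇑K₁ '' Metric.closedBall 0 1) := by
    intro n
    apply subset_closure
    apply Set.mem_image_of_mem
    rw [Metric.mem_closedBall, dist_zero_right, he1 n]
  obtain ⟨y, -, φ, hφ, hyt⟩ := hcpt.tendsto_subseq hmem
  have hconv : Tendsto (e ∘ φ) atTop (𝓝 (0 - y)) := by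
    have h1 : (e ∘ φ) = fun n => B (S (e (φ n))) - K₁ (e (φ n)) :=
      funext fun n => hBS (φ n)
    rw [h1]
    exact (hBz.comp hφ.tendsto_atTop).sub hyt
  exact he3 φ hφ _ hconv
end

section
/- Suppose A is a positive invertible contraction on a Hilbert space H, H = ⊕_{k∈ℤ} Y_k is an orthogonal decomposition into subspaces reducing A, and U is a unitary on H with U Y_k = Y_{k+1} for all k, lim_{k→∞} min σ(A|Y_k) = 1, and ‖A^{1/2} y‖ ≤ ‖A^{1/2} U y‖ for every y ∈ Y_k and k ∈ ℤ. Then T := A^{-1/2} U A^{1/2} is a contraction whose asymptotic limit A_T equals A. -/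
open ContinuousLinearMap Filter Topology

theorem aux_quart {H : Type*} [NormedAddCommGroup H] [InnerProductSpace ℂ H] [CompleteSpace H]
    (P : H →L[ℂ] H) (hP : P.IsPositive) (w : H) :
    ‖P w‖ ^ 4 ≤ RCLike.re (inner ℂ (P w) w : ℂ) * (‖P‖ ^ 3 * ‖w‖ ^ 2) := by
  have hPadj := hP.isSelfAdjoint.adjoint_eq
  set a : ℝ := RCLike.re (inner ℂ (P w) w : ℂ) with ha
  set b : ℝ := ‖P w‖ ^ 2 with hb
  set c : ℝ := RCLike.re (inner ℂ (P (P w)) (P w) : ℂ) with hc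
  have hb' : RCLike.re (inner ℂ (P (P w)) w : ℂ) = b := by
    rw [hb, ← inner_self_eq_norm_sq (𝕜 := ℂ)]
    congr 1
    calc (inner ℂ (P (P w)) w : ℂ) = inner ℂ (adjoint P (P w)) w := by rw [hPadj]
    _ = inner ℂ (P w) (P w) := adjoint_inner_left P w (P w)
  have hb'' : RCLike.re (inner ℂ (P w) (P w) : ℂ) = b := by
    rw [hb, inner_self_eq_norm_sq (𝕜 := ℂ)]
  have hquad : ∀ t : ℝ, 0 ≤ c * (t * t) + (-2 * b) * t + a := by
    intro t
    have h0 := hP.re_inner_nonneg_left (w - (t : ℂ) • P w)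
    have hexp : (inner ℂ (P (w - (t:ℂ) • P w)) (w - (t:ℂ) • P w) : ℂ)
        = inner ℂ (P w) w - (t:ℂ) * (inner ℂ (P w) (P w) : ℂ) - (t:ℂ) * (inner ℂ (P (P w)) w : ℂ)
          + (((t*t : ℝ)):ℂ) * (inner ℂ (P (P w)) (P w) : ℂ) := by
      rw [map_sub, map_smul]
      simp only [inner_sub_left, inner_sub_right, inner_smul_left, inner_smul_right,
        Complex.conj_ofReal]
      push_cast
      ring
    rw [hexp] at h0
    have hsm : ∀ (s : ℝ) (z : ℂ), RCLike.re ((s:ℂ) * z) = s * RCLike.re z := fun s z => by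
      rw [← Complex.real_smul]; exact RCLike.smul_re s z
    simp only [map_sub, map_add, hsm, hb', hb'', ← ha, ← hc] at h0
    nlinarith [h0]
  have hd := discrim_le_zero hquad
  rw [discrim] at hd
  have hbsq : b ^ 2 ≤ a * c := by nlinarith
  have hc_le : c ≤ ‖P‖ ^ 3 * ‖w‖ ^ 2 := by
    have h1 : c ≤ ‖(inner ℂ (P (P w)) (P w) : ℂ)‖ := RCLike.re_le_norm _
    have h2 : ‖(inner ℂ (P (P w)) (P w) : ℂ)‖ ≤ ‖P (P w)‖ * ‖P w‖ := norm_inner_le_norm _ _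
    have h3 : ‖P (P w)‖ ≤ ‖P‖ * ‖P w‖ := P.le_opNorm _
    have h4 : ‖P w‖ ≤ ‖P‖ * ‖w‖ := P.le_opNorm _
    have h5 : (0:ℝ) ≤ ‖P‖ := norm_nonneg _
    have h6 : (0:ℝ) ≤ ‖w‖ := norm_nonneg _
    have h7 : (0:ℝ) ≤ ‖P w‖ := norm_nonneg _
    nlinarith [mul_le_mul_of_nonneg_right h3 h7, pow_le_pow_left₀ h7 h4 2]
  have ha0 : 0 ≤ a := hP.re_inner_nonneg_left w
  calc ‖P w‖ ^ 4 = b ^ 2 := by rw [hb]; ring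
  _ ≤ a * c := hbsq
  _ ≤ a * (‖P‖ ^ 3 * ‖w‖ ^ 2) := mul_le_mul_of_nonneg_left hc_le ha0



set_option maxHeartbeats 2000000 in
/-- Suppose `A` is a positive invertible contraction, `H = ⊕_{k ∈ ℤ} Y_k` is an orthogonal
decomposition into subspaces reducing `A`, and `U` is a unitary with `U Y_k = Y_{k+1}`,
`lim_{k → ∞} min σ(A|Y_k) = 1` and `‖A^{1/2} y‖ ≤ ‖A^{1/2} (U y)‖` for every `y ∈ Y_k`.
Then `T := A^{-1/2} U A^{1/2}` is a contraction whose asymptotic limit is `A`.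
(Here `S` denotes the positive square root `A^{1/2}` and `S'` its inverse.) -/
theorem stmt18 {H : Type*} [NormedAddCommGroup H] [InnerProductSpace ℂ H] [CompleteSpace H]
    (A : H →L[ℂ] H) (hApos : A.IsPositive) (hAcontr : ‖A‖ ≤ 1) (hAinv : IsUnit A)
    (S S' : H →L[ℂ] H) (hSpos : S.IsPositive) (hSA : S ∘L S = A)
    (hSS' : S ∘L S' = 1) (hS'S : S' ∘L S = 1)
    (Y : ℤ → Submodule ℂ H)
    (horth : ∀ j k : ℤ, j ≠ k → ∀ x ∈ Y j, ∀ y ∈ Y k, (inner ℂ x y : ℂ) = 0)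
    (hspan : (⨆ k : ℤ, Y k).topologicalClosure = ⊤)
    (hred : ∀ k : ℤ, ∀ y ∈ Y k, A y ∈ Y k ∧ adjoint A y ∈ Y k)
    (U : H →L[ℂ] H) (hU : U ∈ unitary (H →L[ℂ] H))
    (hshift : ∀ k : ℤ, (Y k).map (U : H →ₗ[ℂ] H) = Y (k + 1))
    (hmin : ∀ ε : ℝ, 0 < ε → ∃ N : ℤ, ∀ k ≥ N, ∀ y ∈ Y k,
      (1 - ε) * ‖y‖ ^ 2 ≤ RCLike.re (inner ℂ (A y) y : ℂ))
    (hmono : ∀ k : ℤ, ∀ y ∈ Y k, ‖S y‖ ≤ ‖S (U y)‖) :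
    ‖S' ∘L U ∘L S‖ ≤ 1 ∧
    ∀ x : H, Tendsto
      (fun n : ℕ => (adjoint ((S' ∘L U ∘L S) ^ n) ∘L (S' ∘L U ∘L S) ^ n) x)
      atTop (𝓝 (A x)) := by
  -- basic adjoint facts
  have hAadj : adjoint A = A := hApos.isSelfAdjoint.adjoint_eq
  have hSadj : adjoint S = S := hSpos.isSelfAdjoint.adjoint_eq
  have hSS'ap : ∀ w, S (S' w) = w := fun w => by
    have := DFunLike.congr_fun hSS' w; simpa using this
  have hS'Sap : ∀ w, S' (S w) = w := fun w => by
    have := DFunLike.congr_fun hS'S w; simpa using this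
  have hadj1 : adjoint (1 : H →L[ℂ] H) = 1 := by
    rw [← star_eq_adjoint, star_one]
  have hS'adj : adjoint S' = S' := by
    have h1 : adjoint S' ∘L S = 1 := by
      have := congrArg adjoint hSS'
      rw [adjoint_comp, hSadj, hadj1] at this
      exact this
    have h2 : (adjoint S' ∘L S) ∘L S' = S' := by rw [h1, one_def, id_comp]
    rw [comp_assoc, hSS', ContinuousLinearMap.one_def, ContinuousLinearMap.comp_id] at h2
    exact h2
  -- unitary facts
  have hU1 : adjoint U ∘L U = 1 := by
    have := hU.1
    rwa [star_eq_adjoint, ContinuousLinearMap.mul_def] at this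
  have hU2 : U ∘L adjoint U = 1 := by
    have := hU.2
    rwa [star_eq_adjoint, ContinuousLinearMap.mul_def] at this
  have hUadj_ap : ∀ w, adjoint U (U w) = w := fun w => by
    have := DFunLike.congr_fun hU1 w; simpa using this
  have hUadj_ap' : ∀ w, U (adjoint U w) = w := fun w => by
    have := DFunLike.congr_fun hU2 w; simpa using this
  have hUiso : ∀ w, ‖U w‖ = ‖w‖ := fun w => by
    have h1 : (inner ℂ (U w) (U w) : ℂ) = inner ℂ w w := by
      have h2 := adjoint_inner_left U w (U w)
      rw [hUadj_ap] at h2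
      exact h2.symm
    have h2 : ‖U w‖ ^ 2 = ‖w‖ ^ 2 := by
      rw [← inner_self_eq_norm_sq (𝕜 := ℂ), ← inner_self_eq_norm_sq (𝕜 := ℂ), h1]
    rw [← Real.sqrt_sq (norm_nonneg (U w)), h2, Real.sqrt_sq (norm_nonneg w)]
  have hUadj_iso : ∀ w, ‖adjoint U w‖ = ‖w‖ := fun w => by
    rw [← hUiso (adjoint U w), hUadj_ap']
  -- norm of S
  have hSnorm : ‖S‖ ≤ 1 := by
    have h1 : ‖adjoint S ∘L S‖ = ‖S‖ * ‖S‖ := norm_adjoint_comp_self S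
    rw [hSadj, hSA] at h1
    nlinarith [norm_nonneg S]
  -- quadratic form of A
  have hA_of_S : ∀ z, RCLike.re (inner ℂ (A z) z : ℂ) = ‖S z‖ ^ 2 := fun z => by
    have h1 : (inner ℂ (A z) z : ℂ) = inner ℂ (S z) (S z) := by
      rw [← hSA]
      calc (inner ℂ ((S ∘L S) z) z : ℂ) = inner ℂ (adjoint S (S z)) z := by
            rw [hSadj]; rfl
      _ = inner ℂ (S z) (S z) := adjoint_inner_left S z (S z)
    rw [h1, inner_self_eq_norm_sq (𝕜 := ℂ)]
  -- Y invariance facts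
  have hYU : ∀ k : ℤ, ∀ y ∈ Y k, U y ∈ Y (k + 1) := by
    intro k y hy
    rw [← hshift k]
    exact Submodule.mem_map_of_mem hy
  have hYUadj : ∀ k : ℤ, ∀ y ∈ Y (k + 1), adjoint U y ∈ Y k := by
    intro k y hy
    rw [← hshift k] at hy
    obtain ⟨z, hz, rfl⟩ := hy
    rw [show (U : H →ₗ[ℂ] H) z = U z from rfl, hUadj_ap]
    exact hz
  have hYUn : ∀ n : ℕ, ∀ k : ℤ, ∀ y ∈ Y k, (U ^ n) y ∈ Y (k + n) := by
    intro n
    induction n with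
    | zero => intro k y hy; simpa using hy
    | succ n ih =>
      intro k y hy
      have h1 : (U ^ (n+1)) y = (U ^ n) (U y) := by
        rw [pow_succ, ContinuousLinearMap.mul_apply]
      rw [h1]
      have := ih (k+1) (U y) (hYU k y hy)
      convert this using 2
      push_cast; ring
  have hYUadjn : ∀ n : ℕ, ∀ k : ℤ, ∀ y ∈ Y (k + n), ((adjoint U) ^ n) y ∈ Y k := by
    intro n
    induction n with
    | zero => intro k y hy; simpa using hy
    | succ n ih =>
      intro k y hy
      have h1 : ((adjoint U) ^ (n+1)) y = ((adjoint U) ^ n) (adjoint U y) := by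
        rw [pow_succ, ContinuousLinearMap.mul_apply]
      rw [h1]
      apply ih k
      apply hYUadj
      convert hy using 2
      push_cast; ring
  -- diagonalization of quadratic forms
  have diag : ∀ P : H →L[ℂ] H, (∀ k : ℤ, ∀ y ∈ Y k, P y ∈ Y k) →
      ∀ f : ℤ →₀ H, (∀ k, f k ∈ Y k) →
      (inner ℂ (P (f.sum fun _ v => v)) (f.sum fun _ v => v) : ℂ)
        = ∑ k ∈ f.support, (inner ℂ (P (f k)) (f k) : ℂ) := by
    intro P hP f hf
    have hsum : (f.sum fun _ v => v) = ∑ k ∈ f.support, f k := rfl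
    rw [hsum, map_sum, sum_inner]
    apply Finset.sum_congr rfl
    intro j hj
    rw [inner_sum]
    apply Finset.sum_eq_single_of_mem j hj
    intro k hk hkj
    exact horth j k (Ne.symm hkj) (P (f j)) (hP j (f j) (hf j)) (f k) (hf k)
  -- Part 1 : global monotonicity and contraction
  have key1 : ∀ x : H, ‖S x‖ ≤ ‖S (U x)‖ := by
    set P : H →L[ℂ] H := adjoint U ∘L (A ∘L U) with hPdef
    have hPinv : ∀ k : ℤ, ∀ y ∈ Y k, P y ∈ Y k := by
      intro k y hy
      have h2 : A (U y) ∈ Y (k+1) := (hred (k+1) _ (hYU k y hy)).1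
      have h3 := hYUadj k _ h2
      simpa [hPdef] using h3
    have hAinvY : ∀ k : ℤ, ∀ y ∈ Y k, A y ∈ Y k := fun k y hy => (hred k y hy).1
    have hPq : ∀ z, RCLike.re (inner ℂ (P z) z : ℂ) = ‖S (U z)‖^2 := fun z => by
      have h1 : (inner ℂ (P z) z : ℂ) = inner ℂ (A (U z)) (U z) := by
        simp only [hPdef, comp_apply]
        exact adjoint_inner_left U z (A (U z))
      rw [h1, hA_of_S]
    have hspanle : ∀ x ∈ (⨆ k : ℤ, Y k), ‖S x‖^2 ≤ ‖S (U x)‖^2 := by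
      intro x hx
      obtain ⟨f, hf, rfl⟩ := (Submodule.mem_iSup_iff_exists_finsupp _ _).mp hx
      have hdA := congrArg RCLike.re (diag A hAinvY f hf)
      have hdP := congrArg RCLike.re (diag P hPinv f hf)
      rw [map_sum] at hdA hdP
      have h1 : ‖S (f.sum fun _ v => v)‖^2 = ∑ k ∈ f.support, ‖S (f k)‖^2 := by
        rw [← hA_of_S, hdA]
        exact Finset.sum_congr rfl fun k _ => hA_of_S (f k)
      have h2 : ‖S (U (f.sum fun _ v => v))‖^2 = ∑ k ∈ f.support, ‖S (U (f k))‖^2 := by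
        rw [← hPq, hdP]
        exact Finset.sum_congr rfl fun k _ => hPq (f k)
      rw [h1, h2]
      apply Finset.sum_le_sum
      intro k _
      have := hmono k (f k) (hf k)
      nlinarith [norm_nonneg (S (f k)), norm_nonneg (S (U (f k)))]
    have hdense : Dense ((⨆ k : ℤ, Y k : Submodule ℂ H) : Set H) :=
      Submodule.dense_iff_topologicalClosure_eq_top.mpr hspan
    have hcont : Continuous fun x : H => ‖S (U x)‖^2 - ‖S x‖^2 := by
      apply Continuous.sub
      · exact ((S.continuous.comp U.continuous).norm).pow 2
      · exact (S.continuous.norm).pow 2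
    have hall : ∀ x : H, 0 ≤ ‖S (U x)‖^2 - ‖S x‖^2 := by
      have hsub : ((⨆ k : ℤ, Y k : Submodule ℂ H) : Set H) ⊆
          {x : H | 0 ≤ ‖S (U x)‖^2 - ‖S x‖^2} := fun x hx => by
        simpa using sub_nonneg.mpr (hspanle x hx)
      have hclosed : IsClosed {x : H | 0 ≤ ‖S (U x)‖^2 - ‖S x‖^2} :=
        isClosed_le continuous_const hcont
      intro x
      have h3 : closure ((⨆ k : ℤ, Y k : Submodule ℂ H) : Set H) ⊆
          {x : H | 0 ≤ ‖S (U x)‖^2 - ‖S x‖^2} := hclosed.closure_subset_iff.mpr hsub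
      rw [hdense.closure_eq] at h3
      exact h3 (Set.mem_univ x)
    intro x
    nlinarith [hall x, norm_nonneg (S x), norm_nonneg (S (U x))]
  have hTadj : adjoint (S' ∘L U ∘L S) = S ∘L (adjoint U ∘L S') := by
    rw [adjoint_comp, adjoint_comp, hSadj, hS'adj, comp_assoc]
  have part1 : ‖S' ∘L U ∘L S‖ ≤ 1 := by
    have h1 : ‖adjoint (S' ∘L U ∘L S)‖ ≤ 1 := by
      apply opNorm_le_bound _ zero_le_one
      intro z
      rw [hTadj]
      have h2 : (S ∘L (adjoint U ∘L S')) z = S (adjoint U (S' z)) := rfl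
      rw [h2, one_mul]
      calc ‖S (adjoint U (S' z))‖ ≤ ‖S (U (adjoint U (S' z)))‖ := key1 _
      _ = ‖S (S' z)‖ := by rw [hUadj_ap']
      _ = ‖z‖ := by rw [hSS'ap]
    calc ‖S' ∘L U ∘L S‖ = ‖adjoint (S' ∘L U ∘L S)‖ :=
      (LinearIsometryEquiv.norm_map adjoint (S' ∘L U ∘L S)).symm
    _ ≤ 1 := h1
  -- Part 2 prerequisites
  have hdense : Dense ((⨆ k : ℤ, Y k : Submodule ℂ H) : Set H) :=
    Submodule.dense_iff_topologicalClosure_eq_top.mpr hspan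
  have hadj_pow : ∀ n : ℕ, adjoint (U ^ n) = (adjoint U) ^ n := fun n => by
    rw [← star_eq_adjoint, ← star_eq_adjoint, star_pow]
  have hUn_iso : ∀ (n : ℕ) (z : H), ‖(U ^ n) z‖ = ‖z‖ := by
    intro n
    induction n with
    | zero => intro z; simp
    | succ n ih =>
      intro z
      rw [pow_succ, ContinuousLinearMap.mul_apply, ih, hUiso]
  have hUadjn_iso : ∀ (n : ℕ) (z : H), ‖((adjoint U) ^ n) z‖ = ‖z‖ := by
    intro n
    induction n with
    | zero => intro z; simp
    | succ n ih =>
      intro z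
      rw [pow_succ, ContinuousLinearMap.mul_apply, ih, hUadj_iso]
  have hUadjUn : ∀ (n : ℕ) (w : H), ((adjoint U) ^ n) ((U ^ n) w) = w := by
    intro n
    induction n with
    | zero => intro w; simp
    | succ n ih =>
      intro w
      rw [pow_succ' U, ContinuousLinearMap.mul_apply, pow_succ (adjoint U),
        ContinuousLinearMap.mul_apply, hUadj_ap, ih]
  -- the operator 1 - A is positive with pointwise bound 2
  have hPa_apply : ∀ w : H, ((1 : H →L[ℂ] H) - A) w = w - A w := fun w => by
    rw [ContinuousLinearMap.sub_apply, ContinuousLinearMap.one_apply]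
  have hAle : ∀ w : H, RCLike.re (inner ℂ (A w) w : ℂ) ≤ ‖w‖ ^ 2 := by
    intro w
    have h1 : RCLike.re (inner ℂ (A w) w : ℂ) ≤ ‖(inner ℂ (A w) w : ℂ)‖ := RCLike.re_le_norm _
    have h2 : ‖(inner ℂ (A w) w : ℂ)‖ ≤ ‖A w‖ * ‖w‖ := norm_inner_le_norm _ _
    have h3 : ‖A w‖ ≤ ‖A‖ * ‖w‖ := A.le_opNorm _
    nlinarith [norm_nonneg w, norm_nonneg A, norm_nonneg (A w)]
  have hPapos : ((1 : H →L[ℂ] H) - A).IsPositive := by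
    constructor
    · exact isSelfAdjoint_iff_isSymmetric.mp ((IsSelfAdjoint.one (R := H →L[ℂ] H)).sub hApos.isSelfAdjoint)
    · intro w
      have : ContinuousLinearMap.reApplyInnerSelf ((1 : H →L[ℂ] H) - A) w
          = ‖w‖ ^ 2 - RCLike.re (inner ℂ (A w) w : ℂ) := by
        rw [ContinuousLinearMap.reApplyInnerSelf_apply, hPa_apply, inner_sub_left, map_sub,
          inner_self_eq_norm_sq (𝕜 := ℂ)]
      rw [this]
      linarith [hAle w]
  have hPa_bound : ∀ w : H, ‖((1 : H →L[ℂ] H) - A) w‖ ≤ 2 * ‖w‖ := by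
    intro w
    rw [hPa_apply]
    have h1 : ‖A w‖ ≤ ‖w‖ := by
      have := A.le_opNorm w
      nlinarith [norm_nonneg w]
    calc ‖w - A w‖ ≤ ‖w‖ + ‖A w‖ := norm_sub_le _ _
    _ ≤ 2 * ‖w‖ := by linarith
  -- the quadratic form along the orbit
  set q : H → ℕ → ℝ := fun z n =>
    RCLike.re (inner ℂ (((1 : H →L[ℂ] H) - A) ((U ^ n) z)) ((U ^ n) z) : ℂ) with hqdef
  have hq_nonneg : ∀ z n, 0 ≤ q z n := fun z n => hPapos.re_inner_nonneg_left _
  have hq_diff : ∀ z z' n, q z n ≤ q z' n + 2 * ‖z - z'‖ * (‖z‖ + ‖z'‖) := by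
    intro z z' n
    set w := (U ^ n) z
    set w' := (U ^ n) z'
    set Pa := (1 : H →L[ℂ] H) - A with hPadef
    have hw : ‖w - w'‖ = ‖z - z'‖ := by
      rw [← map_sub, hUn_iso]
    have hwn : ‖w‖ = ‖z‖ := hUn_iso n z
    have hwn' : ‖w'‖ = ‖z'‖ := hUn_iso n z'
    have hsplit : (inner ℂ (Pa w) w : ℂ) - inner ℂ (Pa w') w'
        = inner ℂ (Pa (w - w')) w + inner ℂ (Pa w') (w - w') := by
      rw [map_sub, inner_sub_left, inner_sub_right]
      ring
    have h1 : RCLike.re ((inner ℂ (Pa (w - w')) w : ℂ)) ≤ 2 * ‖z - z'‖ * ‖z‖ := by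
      have := RCLike.re_le_norm (inner ℂ (Pa (w - w')) w : ℂ)
      have h2 := norm_inner_le_norm (𝕜 := ℂ) (Pa (w - w')) w
      have h3 := hPa_bound (w - w')
      rw [hw] at h3
      rw [hwn] at h2
      nlinarith [norm_nonneg (w - w'), norm_nonneg z, norm_nonneg (z - z')]
    have h4 : RCLike.re ((inner ℂ (Pa w') (w - w') : ℂ)) ≤ 2 * ‖z - z'‖ * ‖z'‖ := by
      have := RCLike.re_le_norm (inner ℂ (Pa w') (w - w') : ℂ)
      have h2 := norm_inner_le_norm (𝕜 := ℂ) (Pa w') (w - w')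
      have h3 := hPa_bound w'
      rw [hwn'] at h3
      rw [hw] at h2
      nlinarith [norm_nonneg (w - w'), norm_nonneg z', norm_nonneg w']
    have h5 : q z n - q z' n = RCLike.re ((inner ℂ (Pa (w - w')) w : ℂ))
        + RCLike.re ((inner ℂ (Pa w') (w - w') : ℂ)) := by
      have h6 := congrArg RCLike.re hsplit
      rw [map_sub, map_add] at h6
      exact h6
    linarith
  have hq_single : ∀ k : ℤ, ∀ z ∈ Y k, Tendsto (fun n => q z n) atTop (𝓝 0) := by
    intro k z hz
    rw [Metric.tendsto_atTop]
    intro ε hε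
    have hpos : 0 < ε / (‖z‖^2 + 1) := by positivity
    obtain ⟨N, hN⟩ := hmin (ε / (‖z‖^2 + 1)) hpos
    refine ⟨(N - k).toNat, fun n hn => ?_⟩
    have hk : N ≤ k + (n:ℤ) := by
      have := Int.toNat_le.mp hn
      omega
    have hzn : (U ^ n) z ∈ Y (k + n) := hYUn n k z hz
    have h2 := hN (k + n) hk ((U ^ n) z) hzn
    have h3 : q z n = ‖(U ^ n) z‖^2 - RCLike.re (inner ℂ (A ((U ^ n) z)) ((U ^ n) z) : ℂ) := by
      rw [hqdef]
      simp only []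
      rw [hPa_apply, inner_sub_left, map_sub, inner_self_eq_norm_sq (𝕜 := ℂ)]
    rw [Real.dist_eq, sub_zero, abs_of_nonneg (hq_nonneg z n)]
    have h4 : ‖(U ^ n) z‖ = ‖z‖ := hUn_iso n z
    rw [h3, h4]
    rw [h4] at h2
    have h5 : (0:ℝ) ≤ ‖z‖^2 := sq_nonneg _
    have h6 : ε / (‖z‖^2 + 1) * (‖z‖^2) < ε := by
      rw [div_mul_eq_mul_div]
      rw [div_lt_iff₀ (by positivity)]
      nlinarith
    nlinarith
  have hq_span : ∀ z ∈ (⨆ k : ℤ, Y k), Tendsto (fun n => q z n) atTop (𝓝 0) := by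
    intro z hz
    obtain ⟨f, hf, rfl⟩ := (Submodule.mem_iSup_iff_exists_finsupp _ _).mp hz
    have hsum : ∀ n, q (f.sum fun _ v => v) n = ∑ k ∈ f.support, q (f k) n := by
      intro n
      set P : H →L[ℂ] H := ((adjoint U) ^ n) ∘L (((1 : H →L[ℂ] H) - A) ∘L (U ^ n)) with hPdef2
      have hPinv : ∀ j : ℤ, ∀ y ∈ Y j, P y ∈ Y j := by
        intro j y hy
        have h1 : (U ^ n) y ∈ Y (j + n) := hYUn n j y hy
        have h2 : ((1 : H →L[ℂ] H) - A) ((U ^ n) y) ∈ Y (j + n) := by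
          rw [hPa_apply]
          exact Submodule.sub_mem _ h1 (hred (j + n) _ h1).1
        have h3 := hYUadjn n j _ h2
        simpa [hPdef2] using h3
      have hq_eq : ∀ w, q w n = RCLike.re (inner ℂ (P w) w : ℂ) := by
        intro w
        rw [hqdef]
        simp only [hPdef2, comp_apply]
        congr 1
        have h4 := adjoint_inner_left (U ^ n) w (((1 : H →L[ℂ] H) - A) ((U ^ n) w))
        rw [hadj_pow] at h4
        exact h4.symm
      rw [hq_eq]
      have h5 := congrArg RCLike.re (diag P hPinv f hf)
      rw [map_sum] at h5
      rw [h5]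
      exact Finset.sum_congr rfl fun k _ => (hq_eq (f k)).symm
    have h6 : Tendsto (fun n => ∑ k ∈ f.support, q (f k) n) atTop (𝓝 0) := by
      have h7 := tendsto_finset_sum f.support (fun k _ => hq_single k (f k) (hf k))
      simpa using h7
    exact h6.congr (fun n => (hsum n).symm)
  have qlim : ∀ z : H, Tendsto (fun n => q z n) atTop (𝓝 0) := by
    intro z
    rw [Metric.tendsto_atTop]
    intro ε hε
    have hδpos : 0 < min 1 (ε / (8 * (‖z‖ + 1))) := lt_min one_pos (by positivity)
    obtain ⟨z', hz'mem, hzz'⟩ := hdense.exists_dist_lt z hδpos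
    have hq' := hq_span z' hz'mem
    rw [Metric.tendsto_atTop] at hq'
    obtain ⟨N, hN⟩ := hq' (ε/2) (half_pos hε)
    refine ⟨N, fun n hn => ?_⟩
    have h1 := hq_diff z z' n
    have h2 := hN n hn
    rw [Real.dist_eq, sub_zero, abs_of_nonneg (hq_nonneg z' n)] at h2
    rw [Real.dist_eq, sub_zero, abs_of_nonneg (hq_nonneg z n)]
    have h3 : ‖z - z'‖ < min 1 (ε / (8 * (‖z‖ + 1))) := by
      rw [← dist_eq_norm]; exact hzz'
    have h4 : ‖z'‖ ≤ ‖z‖ + 1 := by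
      have h5 : ‖z'‖ - ‖z‖ ≤ ‖z' - z‖ := by
        have := norm_sub_norm_le z' z
        linarith
      have h6 : ‖z' - z‖ = ‖z - z'‖ := norm_sub_rev _ _
      have h7 : ‖z - z'‖ ≤ 1 := le_of_lt (lt_of_lt_of_le h3 (min_le_left _ _))
      linarith
    have h8 : ‖z - z'‖ ≤ ε / (8 * (‖z‖ + 1)) := le_of_lt (lt_of_lt_of_le h3 (min_le_right _ _))
    have h9 : 2 * ‖z - z'‖ * (‖z‖ + ‖z'‖) ≤ ε / 2 := by
      have h10 : ‖z‖ + ‖z'‖ ≤ 2 * (‖z‖ + 1) := by linarith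
      have h11 : (0:ℝ) < ‖z‖ + 1 := by positivity
      have h12 : ε / (8 * (‖z‖ + 1)) * (2 * (‖z‖ + 1)) = ε / 4 := by
        field_simp
        ring
      nlinarith [norm_nonneg (z - z'), mul_le_mul h8 h10 (by positivity) (by positivity)]
    linarith
  have nlim : ∀ z : H, Tendsto (fun n : ℕ => ‖((1 : H →L[ℂ] H) - A) ((U ^ n) z)‖) atTop (𝓝 0) := by
    intro z
    rw [Metric.tendsto_atTop]
    intro ε hε
    set C : ℝ := ‖(1 : H →L[ℂ] H) - A‖ ^ 3 * ‖z‖ ^ 2 with hC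
    have hC0 : 0 ≤ C := by positivity
    have hq := qlim z
    rw [Metric.tendsto_atTop] at hq
    obtain ⟨N, hN⟩ := hq (ε^4 / (C + 1)) (by positivity)
    refine ⟨N, fun n hn => ?_⟩
    have h1 := aux_quart ((1 : H →L[ℂ] H) - A) hPapos ((U ^ n) z)
    rw [hUn_iso n z] at h1
    have h1' : ‖((1 : H →L[ℂ] H) - A) ((U ^ n) z)‖ ^ 4 ≤ q z n * C := h1
    have h2 := hN n hn
    rw [Real.dist_eq, sub_zero, abs_of_nonneg (hq_nonneg z n)] at h2
    have h3 : ‖((1 : H →L[ℂ] H) - A) ((U ^ n) z)‖ ^ 4 < ε ^ 4 := by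
      have h4 : q z n * C ≤ (ε^4 / (C + 1)) * C := mul_le_mul_of_nonneg_right (le_of_lt h2) hC0
      have h5 : (ε^4 / (C + 1)) * C < ε^4 := by
        rw [div_mul_eq_mul_div, div_lt_iff₀ (by positivity)]
        nlinarith [pow_pos hε 4]
      linarith
    rw [Real.dist_eq, sub_zero, abs_of_nonneg (norm_nonneg _)]
    by_contra hcon
    push_neg at hcon
    have h6 := pow_le_pow_left₀ hε.le hcon 4
    linarith
  -- power formulas
  have hTn : ∀ (n : ℕ) (x : H), ((S' ∘L U ∘L S) ^ n) x = S' ((U ^ n) (S x)) := by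
    intro n
    induction n with
    | zero =>
      intro x
      rw [pow_zero, pow_zero, ContinuousLinearMap.one_apply, ContinuousLinearMap.one_apply,
        hS'Sap]
    | succ n ih =>
      intro x
      rw [pow_succ, ContinuousLinearMap.mul_apply, ih]
      have hTx : S ((S' ∘L U ∘L S) x) = U (S x) := by
        simp only [comp_apply]
        rw [hSS'ap]
      rw [hTx, pow_succ U, ContinuousLinearMap.mul_apply]
  have hBn : ∀ (n : ℕ) (x : H), ((S ∘L (adjoint U ∘L S')) ^ n) x
      = S (((adjoint U) ^ n) (S' x)) := by
    intro n
    induction n with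
    | zero =>
      intro x
      rw [pow_zero, pow_zero, ContinuousLinearMap.one_apply, ContinuousLinearMap.one_apply,
        hSS'ap]
    | succ n ih =>
      intro x
      rw [pow_succ, ContinuousLinearMap.mul_apply, ih]
      have hBx : S' ((S ∘L (adjoint U ∘L S')) x) = adjoint U (S' x) := by
        simp only [comp_apply]
        rw [hS'Sap]
      rw [hBx, pow_succ (adjoint U), ContinuousLinearMap.mul_apply]
  have hTadjn : ∀ (n : ℕ) (x : H), (adjoint ((S' ∘L U ∘L S) ^ n)) x
      = S (((adjoint U) ^ n) (S' x)) := by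
    intro n x
    have hadjTn : adjoint ((S' ∘L U ∘L S) ^ n) = (adjoint (S' ∘L U ∘L S)) ^ n := by
      rw [← star_eq_adjoint, ← star_eq_adjoint, star_pow]
    rw [hadjTn, hTadj]
    exact hBn n x
  -- final assembly
  have final : ∀ x : H, Tendsto
      (fun n : ℕ => (adjoint ((S' ∘L U ∘L S) ^ n) ∘L (S' ∘L U ∘L S) ^ n) x)
      atTop (𝓝 (A x)) := by
    intro x
    rw [tendsto_iff_norm_sub_tendsto_zero]
    have hb : ∀ n : ℕ, ‖(adjoint ((S' ∘L U ∘L S) ^ n) ∘L (S' ∘L U ∘L S) ^ n) x - A x‖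
        ≤ (‖S'‖ * ‖S'‖) * ‖((1 : H →L[ℂ] H) - A) ((U ^ n) (S x))‖ := by
      intro n
      set w := (U ^ n) (S x) with hw
      have h1 : (adjoint ((S' ∘L U ∘L S) ^ n) ∘L (S' ∘L U ∘L S) ^ n) x
          = S (((adjoint U) ^ n) (S' (S' w))) := by
        rw [comp_apply, hTn n x, hTadjn n _]
      have hAx : A x = S (S x) := by
        have h2 := DFunLike.congr_fun hSA x
        simp only [comp_apply] at h2
        exact h2.symm
      have h2 : A x = S (((adjoint U) ^ n) w) := by
        rw [hw, hUadjUn n (S x), hAx]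
      have h4 : S' (S' w) - w = S' (S' (w - A w)) := by
        rw [map_sub, map_sub]
        congr 1
        have h5 : A w = S (S w) := by
          have h6 := DFunLike.congr_fun hSA w
          simp only [comp_apply] at h6
          exact h6.symm
        rw [h5, hS'Sap, hS'Sap]
      have h7 : ((1 : H →L[ℂ] H) - A) w = w - A w := hPa_apply w
      calc ‖(adjoint ((S' ∘L U ∘L S) ^ n) ∘L (S' ∘L U ∘L S) ^ n) x - A x‖
          = ‖S (((adjoint U) ^ n) (S' (S' w) - w))‖ := by
            rw [h1, h2, ← map_sub S, ← map_sub ((adjoint U) ^ n)]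
      _ ≤ ‖S‖ * ‖((adjoint U) ^ n) (S' (S' w) - w)‖ := S.le_opNorm _
      _ = ‖S‖ * ‖S' (S' w) - w‖ := by rw [hUadjn_iso]
      _ ≤ 1 * ‖S' (S' w) - w‖ := mul_le_mul_of_nonneg_right hSnorm (norm_nonneg _)
      _ = ‖S' (S' (w - A w))‖ := by rw [one_mul, h4]
      _ ≤ ‖S'‖ * ‖S' (w - A w)‖ := S'.le_opNorm _
      _ ≤ ‖S'‖ * (‖S'‖ * ‖w - A w‖) :=
          mul_le_mul_of_nonneg_left (S'.le_opNorm _) (norm_nonneg _)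
      _ = (‖S'‖ * ‖S'‖) * ‖((1 : H →L[ℂ] H) - A) w‖ := by rw [h7]; ring
    have hg : Tendsto (fun n : ℕ => (‖S'‖ * ‖S'‖) * ‖((1 : H →L[ℂ] H) - A) ((U ^ n) (S x))‖)
        atTop (𝓝 0) := by
      have := (nlim (S x)).const_mul (‖S'‖ * ‖S'‖)
      simpa using this
    exact squeeze_zero (fun n => norm_nonneg _) hb hg
  exact ⟨part1, final⟩
end

section
/- Let W = ⊕_{i∈I} W_i be an orthogonal sum of weighted bilateral shift operators, with W power bounded and each W_i similar to a unitary operator. If W is similar to a normal operator, then W is similar to a unitary operator. -/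
open ContinuousLinearMap Filter Topology
open scoped InnerProductSpace

section Aux

variable {H : Type*} [NormedAddCommGroup H] [InnerProductSpace ℂ H] [CompleteSpace H]

/-- Norm preservation by unitary operators. -/
private lemma aux_unitary_norm (U : H →L[ℂ] H) (hU : U ∈ unitary (H →L[ℂ] H)) (v : H) :
    ‖U v‖ = ‖v‖ := by
  have h1 : star U * U = 1 := (Unitary.mem_iff.mp hU).1
  have h2 : (⟪U v, U v⟫_ℂ) = ⟪v, v⟫_ℂ := by
    rw [← ContinuousLinearMap.adjoint_inner_right, ← ContinuousLinearMap.star_eq_adjoint,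
      ← ContinuousLinearMap.mul_apply, h1, ContinuousLinearMap.one_apply]
  rw [inner_self_eq_norm_sq_to_K, inner_self_eq_norm_sq_to_K] at h2
  have h3 : (‖U v‖ : ℝ) ^ 2 = ‖v‖ ^ 2 := by exact_mod_cast h2
  nlinarith [norm_nonneg (U v), norm_nonneg v]

/-- Powers of a product `X * (M * X')` with `X' * X = 1`. -/
private lemma aux_pow_similar (X X' M T : H →L[ℂ] H) (hXX' : X * X' = 1) (hX'X : X' * X = 1)
    (hT : T = X * (M * X')) (n : ℕ) : T ^ n = X * (M ^ n * X') := by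
  induction n with
  | zero => simpa using hXX'.symm
  | succ n ih =>
    rw [pow_succ, ih, hT]
    simp only [pow_succ, mul_assoc]
    rw [← mul_assoc X' X, hX'X, one_mul]

end Aux

set_option maxHeartbeats 1000000

/-- Let `W = ⊕_{i ∈ I} W_i` be an orthogonal (Hilbert) sum of weighted bilateral shift
operators, with `W` power bounded and each `W_i` similar to a unitary operator.  If `W` is
similar to a normal operator, then `W` is similar to a unitary operator. -/
theorem stmt19 {I : Type*} (Hs : I → Type*)
    [∀ i, NormedAddCommGroup (Hs i)] [∀ i, InnerProductSpace ℂ (Hs i)]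
    [∀ i, CompleteSpace (Hs i)]
    (Wi : ∀ i, Hs i →L[ℂ] Hs i)
    -- each `W_i` is a weighted bilateral shift w.r.t. an orthonormal basis indexed by `ℤ`
    (b : ∀ i, HilbertBasis ℤ ℂ (Hs i)) (w : ∀ i, ℤ → ℂ)
    (hw : ∀ i, ∃ C : ℝ, ∀ k : ℤ, ‖w i k‖ ≤ C)
    (hshift : ∀ (i : I) (k : ℤ), Wi i (b i k) = w i k • b i (k + 1))
    -- each `W_i` is similar to a unitary operator
    (hWi : ∀ i : I, ∃ X X' U : Hs i →L[ℂ] Hs i, X ∘L X' = 1 ∧ X' ∘L X = 1 ∧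
      U ∈ unitary (Hs i →L[ℂ] Hs i) ∧ Wi i = X ∘L U ∘L X')
    -- `W` is the orthogonal sum of the `W_i`, acting on the Hilbert sum `⊕_{i} H_i`
    (W : lp Hs 2 →L[ℂ] lp Hs 2)
    (hdiag : ∀ (x : lp Hs 2) (i : I), (W x : ∀ j, Hs j) i = Wi i ((x : ∀ j, Hs j) i))
    (hpb : ∃ C : ℝ, ∀ n : ℕ, ‖W ^ n‖ ≤ C)
    -- `W` is similar to a normal operator
    (hnorm : ∃ X X' N : lp Hs 2 →L[ℂ] lp Hs 2, X ∘L X' = 1 ∧ X' ∘L X = 1 ∧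
      adjoint N ∘L N = N ∘L adjoint N ∧ W = X ∘L N ∘L X') :
    ∃ X X' U : lp Hs 2 →L[ℂ] lp Hs 2, X ∘L X' = 1 ∧ X' ∘L X = 1 ∧
      U ∈ unitary (lp Hs 2 →L[ℂ] lp Hs 2) ∧ W = X ∘L U ∘L X' := by
  rcases subsingleton_or_nontrivial (lp Hs 2) with hss | hnt
  · haveI : Subsingleton (lp Hs 2 →L[ℂ] lp Hs 2) :=
      ⟨fun f g => ContinuousLinearMap.ext fun x => Subsingleton.elim _ _⟩
    exact ⟨1, 1, 1, Subsingleton.elim _ _, Subsingleton.elim _ _,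
      one_mem _, Subsingleton.elim _ _⟩
  obtain ⟨C, hC⟩ := hpb
  obtain ⟨X, X', N, hXX', hX'X, hNn, hWdef⟩ := hnorm
  have hXX'' : X * X' = 1 := hXX'
  have hX'X'' : X' * X = 1 := hX'X
  have hW : W = X * (N * X') := hWdef
  have hcomm : Commute (star N) N := by
    show star N * N = N * star N
    rw [ContinuousLinearMap.star_eq_adjoint]
    exact hNn
  have hWn : ∀ n : ℕ, W ^ n = X * (N ^ n * X') := aux_pow_similar X X' N W hXX'' hX'X'' hW
  have hNpow : ∀ n : ℕ, N ^ n = X' * (W ^ n * X) := by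
    intro n
    rw [hWn n]
    simp only [mul_assoc]
    rw [hX'X'', mul_one, ← mul_assoc, hX'X'', one_mul]
  -- uniform bound on powers of `N`
  set D : ℝ := max (‖X'‖ * (C * ‖X‖)) 1 with hD
  have hD1 : (1 : ℝ) ≤ D := le_max_right _ _
  have hND : ∀ n : ℕ, ‖N ^ n‖ ≤ D := by
    intro n
    have h1 : ‖N ^ n‖ ≤ ‖X'‖ * (‖W ^ n‖ * ‖X‖) := by
      rw [hNpow n]
      exact (norm_mul_le _ _).trans
        (mul_le_mul_of_nonneg_left (norm_mul_le _ _) (norm_nonneg _))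
    have h2 : ‖X'‖ * (‖W ^ n‖ * ‖X‖) ≤ ‖X'‖ * (C * ‖X‖) := by
      gcongr
      exact hC n
    exact h1.trans (h2.trans (le_max_left _ _))
  set A : lp Hs 2 →L[ℂ] lp Hs 2 := star N * N with hA
  have hsaA : IsSelfAdjoint A := IsSelfAdjoint.star_mul_self N
  haveI : ContinuousFunctionalCalculus ℝ (lp Hs 2 →L[ℂ] lp Hs 2) IsSelfAdjoint :=
    IsSelfAdjoint.instContinuousFunctionalCalculus
  have hApow : ∀ n : ℕ, A ^ n = star (N ^ n) * N ^ n := by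
    intro n
    rw [hA, hcomm.mul_pow, star_pow]
  have hAbd : ∀ n : ℕ, ‖A ^ n‖ ≤ D ^ 2 := by
    intro n
    rw [hApow n]
    refine (norm_mul_le _ _).trans ?_
    have hs : ‖star (N ^ n)‖ = ‖N ^ n‖ := by
      rw [ContinuousLinearMap.star_eq_adjoint]
      exact LinearIsometryEquiv.norm_map ContinuousLinearMap.adjoint (N ^ n)
    rw [hs, sq]
    exact mul_le_mul (hND n) (hND n) (norm_nonneg _) (le_trans zero_le_one hD1)
  have hnormA : ‖A‖ ≤ 1 := by
    by_contra hlt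
    push_neg at hlt
    have hpow : ∀ j : ℕ, ‖A ^ (2 ^ j)‖ = ‖A‖ ^ (2 ^ j) := by
      intro j
      induction j with
      | zero => simp
      | succ j ih =>
        have hsa : IsSelfAdjoint (A ^ (2 ^ j)) := hsaA.pow _
        have hsq : ‖(A ^ (2 ^ j)) ^ 2‖ = ‖A ^ (2 ^ j)‖ ^ 2 := by
          rw [sq, sq, ← CStarRing.norm_star_mul_self, hsa.star_eq]
        rw [pow_succ, pow_mul, hsq, ih, ← pow_mul, ← pow_succ]
    obtain ⟨k, hk⟩ := pow_unbounded_of_one_lt (D ^ 2) hlt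
    have h1 : ‖A‖ ^ k ≤ ‖A‖ ^ (2 ^ k) :=
      pow_le_pow_right₀ (le_of_lt hlt) (Nat.le_of_lt (Nat.lt_two_pow_self))
    have h2 := (hpow k) ▸ hAbd (2 ^ k)
    linarith
  -- every real spectral value of `A` equals `1`
  have hspec1 : ∀ μ ∈ spectrum ℝ A, μ = 1 := by
    intro μ hμ
    by_contra hne
    have hμ0 : 0 ≤ μ := spectrum_star_mul_self_nonneg μ (hA ▸ hμ)
    have hμ1 : μ ≤ 1 := by
      have := spectrum.norm_le_norm_of_mem hμ
      rw [Real.norm_eq_abs] at this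
      linarith [le_abs_self μ]
    have hμlt : μ < 1 := lt_of_le_of_ne hμ1 hne
    set r : ℝ := (1 + μ) / 2 with hr
    have hμr : μ < r := by rw [hr]; linarith
    have hr1 : r < 1 := by rw [hr]; linarith
    have hr0 : 0 < r := by rw [hr]; linarith
    set f : ℝ → ℝ := fun t => max 0 (min 1 ((r - t) * (r - μ)⁻¹)) with hf
    have hfc : Continuous f :=
      continuous_const.max (continuous_const.min
        ((continuous_const.sub continuous_id).mul continuous_const))
    have hfμ : f μ = 1 := by
      rw [hf]
      simp only
      rw [mul_inv_cancel₀ (by linarith : r - μ ≠ 0)]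
      norm_num
    have hf0 : ∀ t, 0 ≤ f t := fun t => le_max_left _ _
    have hf1 : ∀ t, f t ≤ 1 := fun t => max_le zero_le_one (min_le_left _ _)
    have hfr : ∀ t, r ≤ t → f t = 0 := by
      intro t ht
      rw [hf]
      simp only
      have h1 : (r - t) * (r - μ)⁻¹ ≤ 0 :=
        mul_nonpos_of_nonpos_of_nonneg (by linarith) (inv_nonneg.mpr (by linarith))
      rw [min_eq_right (h1.trans zero_le_one), max_eq_left h1]
    set B := cfc f A with hBdef
    have hBnorm : (1 : ℝ) ≤ ‖B‖ := by
      have := norm_apply_le_norm_cfc f A hμ hfc.continuousOn hsaA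
      rw [hfμ] at this
      simp only [norm_one] at this
      exact this
    obtain ⟨y, hy⟩ : ∃ y, B y ≠ 0 := by
      by_contra h
      push_neg at h
      have : B = 0 := ContinuousLinearMap.ext fun v => by simpa using h v
      rw [this] at hBnorm
      simp at hBnorm
      linarith
    set x := B y with hx
    have hAnB : ∀ n : ℕ, ‖A ^ n * B‖ ≤ r ^ n := by
      intro n
      have h1 : A ^ n * B = cfc (fun t => t ^ n * f t) A := by
        rw [cfc_mul _ _ A (by fun_prop) hfc.continuousOn, cfc_pow_id A n]
      rw [h1]
      apply norm_cfc_le (pow_nonneg hr0.le n)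
      intro t ht
      have ht0 : 0 ≤ t := spectrum_star_mul_self_nonneg t (hA ▸ ht)
      rcases le_or_gt r t with h | h
      · rw [hfr t h, mul_zero, norm_zero]
        positivity
      · rw [Real.norm_eq_abs, abs_of_nonneg (mul_nonneg (pow_nonneg ht0 n) (hf0 t))]
        calc t ^ n * f t ≤ r ^ n * 1 :=
              mul_le_mul (pow_le_pow_left₀ ht0 h.le n) (hf1 t) (hf0 t) (pow_nonneg hr0.le n)
        _ = r ^ n := mul_one _
    have hNx2 : ∀ n : ℕ, ‖(N ^ n) x‖ ^ 2 ≤ ‖x‖ * ‖y‖ * r ^ n := by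
      intro n
      have e1 : ‖(N ^ n) x‖ ^ 2 = ‖(⟪x, (A ^ n) x⟫_ℂ)‖ := by
        rw [hApow n, ContinuousLinearMap.mul_apply, ContinuousLinearMap.star_eq_adjoint,
          ContinuousLinearMap.adjoint_inner_right, inner_self_eq_norm_sq_to_K]
        rw [norm_pow, RCLike.norm_ofReal, abs_norm]
      rw [e1]
      calc ‖(⟪x, (A ^ n) x⟫_ℂ)‖ ≤ ‖x‖ * ‖(A ^ n) x‖ := norm_inner_le_norm _ _
        _ ≤ ‖x‖ * (r ^ n * ‖y‖) := by
            have h2 : (A ^ n) x = (A ^ n * B) y := by rw [ContinuousLinearMap.mul_apply]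
            rw [h2]
            exact mul_le_mul_of_nonneg_left
              (((A ^ n * B).le_opNorm y).trans
                (mul_le_mul_of_nonneg_right (hAnB n) (norm_nonneg y))) (norm_nonneg x)
        _ = ‖x‖ * ‖y‖ * r ^ n := by ring
    have hNx : Tendsto (fun n : ℕ => ‖(N ^ n) x‖) atTop (𝓝 0) := by
      have h2 : Tendsto (fun n : ℕ => ‖x‖ * ‖y‖ * r ^ n) atTop (𝓝 0) := by
        simpa using (tendsto_pow_atTop_nhds_zero_of_lt_one hr0.le hr1).const_mul (‖x‖ * ‖y‖)
      have hsq : Tendsto (fun n : ℕ => ‖(N ^ n) x‖ ^ 2) atTop (𝓝 0) :=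
        squeeze_zero (fun n => by positivity) hNx2 h2
      have h3 : Tendsto (fun n : ℕ => Real.sqrt (‖(N ^ n) x‖ ^ 2)) atTop (𝓝 (Real.sqrt 0)) :=
        (Real.continuous_sqrt.tendsto 0).comp hsq
      simpa [Real.sqrt_sq (norm_nonneg _)] using h3
    -- transfer to `W`
    set z := X x with hz
    have hxz : X' z = x := by
      rw [hz, ← ContinuousLinearMap.mul_apply, hX'X'', ContinuousLinearMap.one_apply]
    have hxne : x ≠ 0 := hy
    have hzne : z ≠ 0 := by
      intro h
      apply hxne
      rw [← hxz, h, map_zero]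
    obtain ⟨i, hi⟩ : ∃ i, (z : ∀ j, Hs j) i ≠ 0 := by
      by_contra h
      push_neg at h
      apply hzne
      apply lp.ext
      funext j
      simpa using h j
    have hWz : Tendsto (fun n : ℕ => ‖(W ^ n) z‖) atTop (𝓝 0) := by
      have he : ∀ n : ℕ, (W ^ n) z = X ((N ^ n) x) := by
        intro n
        rw [hWn n, ContinuousLinearMap.mul_apply, ContinuousLinearMap.mul_apply, hxz]
      have hb : ∀ n : ℕ, ‖(W ^ n) z‖ ≤ ‖X‖ * ‖(N ^ n) x‖ := by
        intro n
        rw [he n]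
        exact X.le_opNorm _
      exact squeeze_zero (fun n => norm_nonneg _) hb (by simpa using hNx.const_mul ‖X‖)
    obtain ⟨Xi, Xi', Ui, hXiXi', hXi'Xi, hUi, hWieq⟩ := hWi i
    have hXiXi'' : Xi * Xi' = 1 := hXiXi'
    have hXi'Xi'' : Xi' * Xi = 1 := hXi'Xi
    have hWin : ∀ n : ℕ, (Wi i) ^ n = Xi * (Ui ^ n * Xi') :=
      aux_pow_similar Xi Xi' Ui (Wi i) hXiXi'' hXi'Xi'' hWieq
    have hUnorm : ∀ (n : ℕ) (v : Hs i), ‖(Ui ^ n) v‖ = ‖v‖ := fun n v =>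
      aux_unitary_norm (Ui ^ n) (pow_mem hUi n) v
    have hcoord : ∀ n : ℕ, ((W ^ n) z : ∀ j, Hs j) i = ((Wi i) ^ n) ((z : ∀ j, Hs j) i) := by
      intro n
      induction n with
      | zero => simp
      | succ n ih =>
        rw [pow_succ', pow_succ', ContinuousLinearMap.mul_apply,
          ContinuousLinearMap.mul_apply, hdiag, ih]
    have hlow : ∀ n : ℕ, ‖(z : ∀ j, Hs j) i‖ ≤ ‖Xi‖ * ‖Xi'‖ * ‖(W ^ n) z‖ := by
      intro n
      set v := (z : ∀ j, Hs j) i with hv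
      have h1 : ‖v‖ ≤ ‖Xi‖ * ‖Xi' v‖ := by
        conv_lhs => rw [show v = Xi (Xi' v) by
          rw [← ContinuousLinearMap.mul_apply, hXiXi'', ContinuousLinearMap.one_apply]]
        exact Xi.le_opNorm _
      have h3 : (Ui ^ n) (Xi' v) = Xi' (((Wi i) ^ n) v) := by
        rw [hWin n]
        simp only [ContinuousLinearMap.mul_apply]
        rw [← ContinuousLinearMap.mul_apply Xi' Xi, hXi'Xi'', ContinuousLinearMap.one_apply]
      have h2 : ‖Xi' v‖ ≤ ‖Xi'‖ * ‖((Wi i) ^ n) v‖ := by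
        rw [← hUnorm n (Xi' v), h3]
        exact Xi'.le_opNorm _
      have h5 : ‖((Wi i) ^ n) v‖ ≤ ‖(W ^ n) z‖ := by
        rw [← hcoord n]
        exact lp.norm_apply_le_norm (by norm_num) ((W ^ n) z) i
      calc ‖v‖ ≤ ‖Xi‖ * ‖Xi' v‖ := h1
        _ ≤ ‖Xi‖ * (‖Xi'‖ * ‖((Wi i) ^ n) v‖) :=
            mul_le_mul_of_nonneg_left h2 (norm_nonneg Xi)
        _ = ‖Xi‖ * ‖Xi'‖ * ‖((Wi i) ^ n) v‖ := (mul_assoc _ _ _).symm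
        _ ≤ ‖Xi‖ * ‖Xi'‖ * ‖(W ^ n) z‖ :=
            mul_le_mul_of_nonneg_left h5 (mul_nonneg (norm_nonneg Xi) (norm_nonneg Xi'))
    have hfinal : ‖(z : ∀ j, Hs j) i‖ ≤ 0 :=
      ge_of_tendsto' (by simpa using hWz.const_mul (‖Xi‖ * ‖Xi'‖)) hlow
    exact hi (norm_le_zero_iff.mp hfinal)
  have hA1 : A = 1 := by
    have h1 : cfc (id : ℝ → ℝ) A = cfc (fun _ : ℝ => (1 : ℝ)) A :=
      cfc_congr fun μ hμ => hspec1 μ hμ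
    rw [cfc_id ℝ A, cfc_const 1 A] at h1
    rw [h1, map_one]
  have hNA : star N * N = 1 := hA ▸ hA1
  refine ⟨X, X', N, hXX', hX'X, ?_, hWdef⟩
  rw [Unitary.mem_iff]
  exact ⟨hNA, by rw [← hcomm]; exact hNA⟩
end
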